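/- For every positive integer n, 11·σ₉(n) = 21·σ₅(n) − 10·σ₃(n) + 5040 · Σ_{m=1}^{n-1} σ₃(m)σ₅(n−m), where σ_k(n) = Σ_{d|n} d^k. -/

import Mathlib

open Finset

def QdS (n : ℕ) : Finset (ℕ × ℕ × ℕ × ℕ) :=
  ((Finset.Icc 1 n ×ˢ Finset.Icc 1 n ×ˢ Finset.Icc 1 n ×ˢ Finset.Icc 1 n)).filter
    (fun p => p.1 * p.2.1 + p.2.2.1 * p.2.2.2 = n)

lemma mem_QdS {n : ℕ} {p : ℕ × ℕ × ℕ × ℕ} :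
    p ∈ QdS n ↔ (0 < p.1 ∧ 0 < p.2.1 ∧ 0 < p.2.2.1 ∧ 0 < p.2.2.2) ∧
      p.1 * p.2.1 + p.2.2.1 * p.2.2.2 = n := by
  obtain ⟨a, x, b, y⟩ := p
  simp only [QdS, mem_filter, mem_product, Finset.mem_Icc]
  constructor
  · rintro ⟨⟨⟨h1, _⟩, ⟨h2, _⟩, ⟨h3, _⟩, ⟨h4, _⟩⟩, h⟩
    exact ⟨⟨h1, h2, h3, h4⟩, h⟩
  · rintro ⟨⟨h1, h2, h3, h4⟩, h⟩
    have ha : a ≤ n := le_trans (Nat.le_mul_of_pos_right a h2) (le_trans (Nat.le_add_right _ _) h.le)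
    have hx : x ≤ n := le_trans (Nat.le_mul_of_pos_left x h1) (le_trans (Nat.le_add_right _ _) h.le)
    have hb : b ≤ n := le_trans (Nat.le_mul_of_pos_right b h4) (le_trans (Nat.le_add_left _ _) h.le)
    have hy : y ≤ n := le_trans (Nat.le_mul_of_pos_left y h3) (le_trans (Nat.le_add_left _ _) h.le)
    exact ⟨⟨⟨h1, ha⟩, ⟨h2, hx⟩, ⟨h3, hb⟩, ⟨h4, hy⟩⟩, h⟩

/-- swap `(a,x,b,y) ↦ (b,y,a,x)` -/
def swapPt (p : ℕ × ℕ × ℕ × ℕ) : ℕ × ℕ × ℕ × ℕ := (p.2.2.1, p.2.2.2, p.1, p.2.1)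
/-- conj `(a,x,b,y) ↦ (x,a,y,b)` -/
def conjPt (p : ℕ × ℕ × ℕ × ℕ) : ℕ × ℕ × ℕ × ℕ := (p.2.1, p.1, p.2.2.2, p.2.2.1)
/-- cs `(a,x,b,y) ↦ (y,b,x,a)` -/
def csPt (p : ℕ × ℕ × ℕ × ℕ) : ℕ × ℕ × ℕ × ℕ := (p.2.2.2, p.2.2.1, p.2.1, p.1)
/-- mu `(a,x,b,y) ↦ (x+y,b,x,a-b)` -/
def muPt (p : ℕ × ℕ × ℕ × ℕ) : ℕ × ℕ × ℕ × ℕ :=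
  (p.2.1 + p.2.2.2, p.2.2.1, p.2.1, p.1 - p.2.2.1)

/-- region b < a -/
def RA (n : ℕ) : Finset (ℕ × ℕ × ℕ × ℕ) := (QdS n).filter (fun p => p.2.2.1 < p.1)
/-- region x < y -/
def RX (n : ℕ) : Finset (ℕ × ℕ × ℕ × ℕ) := (QdS n).filter (fun p => p.2.1 < p.2.2.2)
/-- diagonal a = b -/
def DA (n : ℕ) : Finset (ℕ × ℕ × ℕ × ℕ) := (QdS n).filter (fun p => p.1 = p.2.2.1)
/-- diagonal x = y -/
def DX (n : ℕ) : Finset (ℕ × ℕ × ℕ × ℕ) := (QdS n).filter (fun p => p.2.1 = p.2.2.2)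

lemma sum_swap_lt (n : ℕ) (h : ℕ × ℕ × ℕ × ℕ → ℤ) :
    ∑ p ∈ (QdS n).filter (fun p => p.1 < p.2.2.1), h p = ∑ p ∈ RA n, h (swapPt p) := by
  apply Finset.sum_nbij' swapPt swapPt
  · rintro ⟨a, x, b, y⟩ hp
    simp only [mem_filter, mem_QdS, RA, swapPt] at hp ⊢
    obtain ⟨⟨⟨h1, h2, h3, h4⟩, hs⟩, hlt⟩ := hp
    exact ⟨⟨⟨h3, h4, h1, h2⟩, by rw [← hs]; ring⟩, hlt⟩
  · rintro ⟨a, x, b, y⟩ hp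
    simp only [mem_filter, mem_QdS, RA, swapPt] at hp ⊢
    obtain ⟨⟨⟨h1, h2, h3, h4⟩, hs⟩, hlt⟩ := hp
    exact ⟨⟨⟨h3, h4, h1, h2⟩, by rw [← hs]; ring⟩, hlt⟩
  · rintro ⟨a, x, b, y⟩ _; rfl
  · rintro ⟨a, x, b, y⟩ _; rfl
  · rintro ⟨a, x, b, y⟩ _; rfl

lemma sum_swap_xlt (n : ℕ) (h : ℕ × ℕ × ℕ × ℕ → ℤ) :
    ∑ p ∈ (QdS n).filter (fun p => p.2.2.2 < p.2.1), h p = ∑ p ∈ RX n, h (swapPt p) := by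
  apply Finset.sum_nbij' swapPt swapPt
  · rintro ⟨a, x, b, y⟩ hp
    simp only [mem_filter, mem_QdS, RX, swapPt] at hp ⊢
    obtain ⟨⟨⟨h1, h2, h3, h4⟩, hs⟩, hlt⟩ := hp
    exact ⟨⟨⟨h3, h4, h1, h2⟩, by rw [← hs]; ring⟩, hlt⟩
  · rintro ⟨a, x, b, y⟩ hp
    simp only [mem_filter, mem_QdS, RX, swapPt] at hp ⊢
    obtain ⟨⟨⟨h1, h2, h3, h4⟩, hs⟩, hlt⟩ := hp
    exact ⟨⟨⟨h3, h4, h1, h2⟩, by rw [← hs]; ring⟩, hlt⟩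
  · rintro ⟨a, x, b, y⟩ _; rfl
  · rintro ⟨a, x, b, y⟩ _; rfl
  · rintro ⟨a, x, b, y⟩ _; rfl

lemma sum_cs (n : ℕ) (h : ℕ × ℕ × ℕ × ℕ → ℤ) :
    ∑ p ∈ RX n, h p = ∑ p ∈ RA n, h (csPt p) := by
  apply Finset.sum_nbij' csPt csPt
  · rintro ⟨a, x, b, y⟩ hp
    simp only [mem_filter, mem_QdS, RX, RA, csPt] at hp ⊢
    obtain ⟨⟨⟨h1, h2, h3, h4⟩, hs⟩, hlt⟩ := hp
    exact ⟨⟨⟨h4, h3, h2, h1⟩, by rw [← hs]; ring⟩, hlt⟩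
  · rintro ⟨a, x, b, y⟩ hp
    simp only [mem_filter, mem_QdS, RX, RA, csPt] at hp ⊢
    obtain ⟨⟨⟨h1, h2, h3, h4⟩, hs⟩, hlt⟩ := hp
    exact ⟨⟨⟨h4, h3, h2, h1⟩, by rw [← hs]; ring⟩, hlt⟩
  · rintro ⟨a, x, b, y⟩ _; rfl
  · rintro ⟨a, x, b, y⟩ _; rfl
  · rintro ⟨a, x, b, y⟩ _; rfl

lemma sum_conj_diag (n : ℕ) (h : ℕ × ℕ × ℕ × ℕ → ℤ) :
    ∑ p ∈ DA n, h p = ∑ p ∈ DX n, h (conjPt p) := by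
  apply Finset.sum_nbij' conjPt conjPt
  · rintro ⟨a, x, b, y⟩ hp
    simp only [mem_filter, mem_QdS, DA, DX, conjPt] at hp ⊢
    obtain ⟨⟨⟨h1, h2, h3, h4⟩, hs⟩, heq⟩ := hp
    exact ⟨⟨⟨h2, h1, h4, h3⟩, by rw [← hs]; ring⟩, heq⟩
  · rintro ⟨a, x, b, y⟩ hp
    simp only [mem_filter, mem_QdS, DA, DX, conjPt] at hp ⊢
    obtain ⟨⟨⟨h1, h2, h3, h4⟩, hs⟩, heq⟩ := hp
    exact ⟨⟨⟨h2, h1, h4, h3⟩, by rw [← hs]; ring⟩, heq⟩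
  · rintro ⟨a, x, b, y⟩ _; rfl
  · rintro ⟨a, x, b, y⟩ _; rfl
  · rintro ⟨a, x, b, y⟩ _; rfl

lemma muPt_invol {n : ℕ} {p : ℕ × ℕ × ℕ × ℕ} (hp : p ∈ RA n) : muPt (muPt p) = p := by
  obtain ⟨a, x, b, y⟩ := p
  simp only [RA, mem_filter, mem_QdS] at hp
  obtain ⟨⟨⟨h1, h2, h3, h4⟩, hs⟩, hlt⟩ := hp
  simp only [muPt, Prod.mk.injEq]
  refine ⟨by omega, ⟨trivial, trivial, by omega⟩⟩

lemma muPt_mem {n : ℕ} {p : ℕ × ℕ × ℕ × ℕ} (hp : p ∈ RA n) : muPt p ∈ RA n := by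
  obtain ⟨a, x, b, y⟩ := p
  simp only [RA, mem_filter, mem_QdS, muPt] at hp ⊢
  obtain ⟨⟨⟨h1, h2, h3, h4⟩, hs⟩, hlt⟩ := hp
  refine ⟨⟨⟨by omega, h3, h2, by omega⟩, ?_⟩, by omega⟩
  have hxb : x * b ≤ x * a := Nat.mul_le_mul_left x hlt.le
  rw [Nat.mul_sub]
  zify [hxb]
  linarith [hs]

lemma sum_mu (n : ℕ) (h : ℕ × ℕ × ℕ × ℕ → ℤ) :
    ∑ p ∈ RA n, h p = ∑ p ∈ RA n, h (muPt p) := by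
  apply Finset.sum_nbij' muPt muPt
  · exact fun p hp => muPt_mem hp
  · exact fun p hp => muPt_mem hp
  · exact fun p hp => muPt_invol hp
  · exact fun p hp => muPt_invol hp
  · exact fun p hp => by rw [muPt_invol hp]
lemma splitAB (n : ℕ) (h : ℕ × ℕ × ℕ × ℕ → ℤ) :
    ∑ p ∈ QdS n, h p =
      (∑ p ∈ RA n, (h p + h (swapPt p))) + ∑ p ∈ DA n, h p := by
  rw [← Finset.sum_filter_add_sum_filter_not (QdS n) (fun p => p.2.2.1 < p.1) h]
  rw [← Finset.sum_filter_add_sum_filter_not ((QdS n).filter (fun p => ¬ p.2.2.1 < p.1))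
    (fun p => p.1 < p.2.2.1) h]
  rw [Finset.filter_filter, Finset.filter_filter]
  have e1 : (QdS n).filter (fun p => ¬ p.2.2.1 < p.1 ∧ p.1 < p.2.2.1)
      = (QdS n).filter (fun p => p.1 < p.2.2.1) := by
    apply Finset.filter_congr; intro p _; constructor
    · rintro ⟨_, h2⟩; exact h2
    · intro h2; exact ⟨by omega, h2⟩
  have e2 : (QdS n).filter (fun p => ¬ p.2.2.1 < p.1 ∧ ¬ p.1 < p.2.2.1)
      = DA n := by
    apply Finset.filter_congr; intro p _; constructor
    · rintro ⟨h1, h2⟩; omega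
    · intro h1; omega
  rw [e1, e2, sum_swap_lt n h, Finset.sum_add_distrib]
  show (∑ p ∈ RA n, h p) + ((∑ p ∈ RA n, h (swapPt p)) + ∑ p ∈ DA n, h p)
    = ((∑ p ∈ RA n, h p) + (∑ p ∈ RA n, h (swapPt p))) + ∑ p ∈ DA n, h p
  ring

lemma splitXY (n : ℕ) (h : ℕ × ℕ × ℕ × ℕ → ℤ) :
    ∑ p ∈ QdS n, h p =
      (∑ p ∈ RX n, (h p + h (swapPt p))) + ∑ p ∈ DX n, h p := by
  rw [← Finset.sum_filter_add_sum_filter_not (QdS n) (fun p => p.2.1 < p.2.2.2) h]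
  rw [← Finset.sum_filter_add_sum_filter_not ((QdS n).filter (fun p => ¬ p.2.1 < p.2.2.2))
    (fun p => p.2.2.2 < p.2.1) h]
  rw [Finset.filter_filter, Finset.filter_filter]
  have e1 : (QdS n).filter (fun p => ¬ p.2.1 < p.2.2.2 ∧ p.2.2.2 < p.2.1)
      = (QdS n).filter (fun p => p.2.2.2 < p.2.1) := by
    apply Finset.filter_congr; intro p _; constructor
    · rintro ⟨_, h2⟩; exact h2
    · intro h2; exact ⟨by omega, h2⟩
  have e2 : (QdS n).filter (fun p => ¬ p.2.1 < p.2.2.2 ∧ ¬ p.2.2.2 < p.2.1)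
      = DX n := by
    apply Finset.filter_congr; intro p _; constructor
    · rintro ⟨h1, h2⟩; omega
    · intro h1; omega
  rw [e1, e2, sum_swap_xlt n h, Finset.sum_add_distrib]
  show (∑ p ∈ RX n, h p) + ((∑ p ∈ RX n, h (swapPt p)) + ∑ p ∈ DX n, h p)
    = ((∑ p ∈ RX n, h p) + (∑ p ∈ RX n, h (swapPt p))) + ∑ p ∈ DX n, h p
  ring
lemma sum_DX (n : ℕ) (hn : 0 < n) (g : ℕ → ℕ → ℤ) :
    ∑ p ∈ DX n, g p.1 p.2.2.1 = ∑ d ∈ n.divisors, ∑ c ∈ Finset.Ico 1 d, g c (d - c) := by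
  rw [Finset.sum_sigma']
  apply Finset.sum_nbij' (i := fun p => ⟨p.1 + p.2.2.1, p.1⟩)
    (j := fun q => (q.2, n / q.1, q.1 - q.2, n / q.1))
  · rintro ⟨a, x, b, y⟩ hp
    simp only [DX, mem_filter, mem_QdS] at hp
    obtain ⟨⟨⟨h1, h2, h3, h4⟩, hs⟩, heq⟩ := hp
    subst heq
    have hs' : (a + b) * x = n := by rw [← hs]; ring
    simp only [Finset.mem_sigma, Nat.mem_divisors, Finset.mem_Ico]
    exact ⟨⟨⟨x, hs'.symm⟩, by omega⟩, by omega, by omega⟩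
  · rintro ⟨d, c⟩ hq
    simp only [Finset.mem_sigma, Nat.mem_divisors, Finset.mem_Ico] at hq
    obtain ⟨⟨hdvd, hn0⟩, hc1, hcd⟩ := hq
    have hd0 : 0 < d := by omega
    have hnd : 0 < n / d := Nat.div_pos (Nat.le_of_dvd hn hdvd) hd0
    simp only [DX, mem_filter, mem_QdS]
    refine ⟨⟨⟨hc1, hnd, by omega, hnd⟩, ?_⟩, trivial⟩
    rw [← Nat.add_mul]
    have h1 : c + (d - c) = d := by omega
    rw [h1, Nat.mul_div_cancel' hdvd]
  · rintro ⟨a, x, b, y⟩ hp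
    simp only [DX, mem_filter, mem_QdS] at hp
    obtain ⟨⟨⟨h1, h2, h3, h4⟩, hs⟩, heq⟩ := hp
    subst heq
    have hs' : (a + b) * x = n := by rw [← hs]; ring
    have hx : n / (a + b) = x := by rw [← hs', Nat.mul_div_cancel_left x (by omega)]
    simp only [Prod.mk.injEq]
    exact ⟨trivial, hx, by omega, hx⟩
  · rintro ⟨d, c⟩ hq
    simp only [Finset.mem_sigma, Nat.mem_divisors, Finset.mem_Ico] at hq
    obtain ⟨⟨hdvd, hn0⟩, hc1, hcd⟩ := hq
    have h1 : c + (d - c) = d := by omega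
    exact congrArg (fun t => (⟨t, c⟩ : Σ _ : ℕ, ℕ)) h1
  · rintro ⟨a, x, b, y⟩ hp
    simp only [DX, mem_filter, mem_QdS] at hp
    obtain ⟨⟨⟨h1, h2, h3, h4⟩, hs⟩, heq⟩ := hp
    have hb : a + b - a = b := by omega
    simp only [hb]

lemma conv_eq (n : ℕ) (hn : 0 < n) :
    ∑ m ∈ Finset.Ioo 0 n,
        (∑ d ∈ m.divisors, (d : ℤ) ^ 3) * (∑ d ∈ (n - m).divisors, (d : ℤ) ^ 5)
      = ∑ p ∈ QdS n, (p.1 : ℤ) ^ 3 * (p.2.2.1 : ℤ) ^ 5 := by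
  have hmaps : ∀ p ∈ QdS n, p.1 * p.2.1 ∈ Finset.Ioo 0 n := by
    rintro ⟨a, x, b, y⟩ hp
    simp only [mem_QdS] at hp
    obtain ⟨⟨h1, h2, h3, h4⟩, hs⟩ := hp
    simp only [Finset.mem_Ioo]
    constructor
    · exact Nat.mul_pos h1 h2
    · calc a * x < a * x + b * y := Nat.lt_add_of_pos_right (Nat.mul_pos h3 h4)
        _ = n := hs
  rw [← Finset.sum_fiberwise_of_maps_to hmaps (fun p => (p.1 : ℤ) ^ 3 * (p.2.2.1 : ℤ) ^ 5)]
  apply Finset.sum_congr rfl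
  intro m hm
  simp only [Finset.mem_Ioo] at hm
  rw [← Nat.sum_divisorsAntidiagonal (f := fun i _ => (i : ℤ) ^ 3),
      ← Nat.sum_divisorsAntidiagonal (f := fun i _ => (i : ℤ) ^ 5),
      Finset.sum_mul_sum]
  rw [← Finset.sum_product']
  apply Finset.sum_nbij' (i := fun q => (q.1.1, q.1.2, q.2.1, q.2.2))
    (j := fun p => ((p.1, p.2.1), (p.2.2.1, p.2.2.2)))
  · rintro ⟨⟨d, x⟩, ⟨e, y⟩⟩ hq
    simp only [Finset.mem_product, Nat.mem_divisorsAntidiagonal] at hq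
    obtain ⟨⟨hdx, hm0⟩, hey, hnm0⟩ := hq
    have hd : 0 < d := by
      rcases Nat.eq_zero_or_pos d with h | h
      · subst h; simp at hdx; omega
      · exact h
    have hx : 0 < x := by
      rcases Nat.eq_zero_or_pos x with h | h
      · subst h; simp at hdx; omega
      · exact h
    have he : 0 < e := by
      rcases Nat.eq_zero_or_pos e with h | h
      · subst h; simp at hey; omega
      · exact h
    have hy : 0 < y := by
      rcases Nat.eq_zero_or_pos y with h | h
      · subst h; simp at hey; omega
      · exact h
    simp only [mem_filter, mem_QdS]
    exact ⟨⟨⟨hd, hx, he, hy⟩, by omega⟩, hdx⟩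
  · rintro ⟨a, x, b, y⟩ hp
    simp only [mem_filter, mem_QdS] at hp
    obtain ⟨⟨⟨h1, h2, h3, h4⟩, hs⟩, hax⟩ := hp
    simp only [Finset.mem_product, Nat.mem_divisorsAntidiagonal]
    have hby : b * y = n - m := by omega
    exact ⟨⟨hax, by omega⟩, hby, by omega⟩
  · rintro ⟨⟨d, x⟩, ⟨e, y⟩⟩ _; rfl
  · rintro ⟨a, x, b, y⟩ _; rfl
  · rintro ⟨⟨d, x⟩, ⟨e, y⟩⟩ _; rfl
lemma pow3_sum (d : ℕ) : 4 * ∑ i ∈ Finset.range d, (i : ℤ) ^ 3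
    = (d : ℤ) ^ 4 - 2 * (d : ℤ) ^ 3 + (d : ℤ) ^ 2 := by
  induction d with
  | zero => simp
  | succ d ih => rw [Finset.sum_range_succ]; push_cast; linear_combination ih

lemma pow4_sum (d : ℕ) : 30 * ∑ i ∈ Finset.range d, (i : ℤ) ^ 4
    = 6 * (d : ℤ) ^ 5 - 15 * (d : ℤ) ^ 4 + 10 * (d : ℤ) ^ 3 - (d : ℤ) := by
  induction d with
  | zero => simp
  | succ d ih => rw [Finset.sum_range_succ]; push_cast; linear_combination ih

lemma pow5_sum (d : ℕ) : 12 * ∑ i ∈ Finset.range d, (i : ℤ) ^ 5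
    = 2 * (d : ℤ) ^ 6 - 6 * (d : ℤ) ^ 5 + 5 * (d : ℤ) ^ 4 - (d : ℤ) ^ 2 := by
  induction d with
  | zero => simp
  | succ d ih => rw [Finset.sum_range_succ]; push_cast; linear_combination ih

lemma pow6_sum (d : ℕ) : 42 * ∑ i ∈ Finset.range d, (i : ℤ) ^ 6
    = 6 * (d : ℤ) ^ 7 - 21 * (d : ℤ) ^ 6 + 21 * (d : ℤ) ^ 5 - 7 * (d : ℤ) ^ 3 + (d : ℤ) := by
  induction d with
  | zero => simp
  | succ d ih => rw [Finset.sum_range_succ]; push_cast; linear_combination ih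

lemma pow7_sum (d : ℕ) : 24 * ∑ i ∈ Finset.range d, (i : ℤ) ^ 7
    = 3 * (d : ℤ) ^ 8 - 12 * (d : ℤ) ^ 7 + 14 * (d : ℤ) ^ 6 - 7 * (d : ℤ) ^ 4
      + 2 * (d : ℤ) ^ 2 := by
  induction d with
  | zero => simp
  | succ d ih => rw [Finset.sum_range_succ]; push_cast; linear_combination ih

/-- Per-divisor Faulhaber evaluation. -/
lemma perdiv (d : ℕ) :
    840 * ∑ c ∈ Finset.range d,
        (3 * (c : ℤ) ^ 3 * ((d : ℤ) - c) ^ 5 + 2 * (c : ℤ) ^ 4 * ((d : ℤ) - c) ^ 4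
          + (c : ℤ) ^ 6 * ((d : ℤ) - c) ^ 2)
      = 11 * (d : ℤ) ^ 9 - 21 * (d : ℤ) ^ 5 + 10 * (d : ℤ) ^ 3 := by
  have expand : ∑ c ∈ Finset.range d,
      (3 * (c : ℤ) ^ 3 * ((d : ℤ) - c) ^ 5 + 2 * (c : ℤ) ^ 4 * ((d : ℤ) - c) ^ 4
        + (c : ℤ) ^ 6 * ((d : ℤ) - c) ^ 2)
      = 3 * (d : ℤ) ^ 5 * (∑ i ∈ Finset.range d, (i : ℤ) ^ 3)
        - 13 * (d : ℤ) ^ 4 * (∑ i ∈ Finset.range d, (i : ℤ) ^ 4)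
        + 22 * (d : ℤ) ^ 3 * (∑ i ∈ Finset.range d, (i : ℤ) ^ 5)
        - 17 * (d : ℤ) ^ 2 * (∑ i ∈ Finset.range d, (i : ℤ) ^ 6)
        + 5 * (d : ℤ) * (∑ i ∈ Finset.range d, (i : ℤ) ^ 7) := by
    simp only [Finset.mul_sum, ← Finset.sum_sub_distrib, ← Finset.sum_add_distrib]
    exact Finset.sum_congr rfl fun c _ => by ring
  rw [expand]
  linear_combination (630 * (d : ℤ) ^ 5) * pow3_sum d - (364 * (d : ℤ) ^ 4) * pow4_sum d
    + (1540 * (d : ℤ) ^ 3) * pow5_sum d - (340 * (d : ℤ) ^ 2) * pow6_sum d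
    + (175 * (d : ℤ)) * pow7_sum d
/-- Integrand `3a³b⁵ + 2a⁴b⁴ - x⁶y²`. -/
def FcI (p : ℕ × ℕ × ℕ × ℕ) : ℤ :=
  3 * (p.1 : ℤ) ^ 3 * (p.2.2.1 : ℤ) ^ 5 + 2 * (p.1 : ℤ) ^ 4 * (p.2.2.1 : ℤ) ^ 4
    - (p.2.1 : ℤ) ^ 6 * (p.2.2.2 : ℤ) ^ 2

/-- Integrand `x²y⁶ + 3x³y⁵ + 4x⁴y⁴ + 3x⁵y³ + x⁶y²`. -/
def PcI (p : ℕ × ℕ × ℕ × ℕ) : ℤ :=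
  (p.2.1 : ℤ) ^ 2 * (p.2.2.2 : ℤ) ^ 6 + 3 * (p.2.1 : ℤ) ^ 3 * (p.2.2.2 : ℤ) ^ 5
    + 4 * (p.2.1 : ℤ) ^ 4 * (p.2.2.2 : ℤ) ^ 4 + 3 * (p.2.1 : ℤ) ^ 5 * (p.2.2.2 : ℤ) ^ 3
    + (p.2.1 : ℤ) ^ 6 * (p.2.2.2 : ℤ) ^ 2

/-- Integrand `a³b⁵`. -/
def f35I (p : ℕ × ℕ × ℕ × ℕ) : ℤ := (p.1 : ℤ) ^ 3 * (p.2.2.1 : ℤ) ^ 5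

lemma six_T (n : ℕ) :
    6 * ∑ p ∈ QdS n, f35I p
      = ∑ p ∈ DX n, (3 * (p.1 : ℤ) ^ 3 * (p.2.2.1 : ℤ) ^ 5
          + 2 * (p.1 : ℤ) ^ 4 * (p.2.2.1 : ℤ) ^ 4 + (p.1 : ℤ) ^ 6 * (p.2.2.1 : ℤ) ^ 2) := by
  have e1 := splitAB n FcI
  have e2 := splitXY n FcI
  have e3 : ∑ p ∈ RX n, (FcI p + FcI (swapPt p))
      = ∑ p ∈ RA n, (FcI (csPt p) + FcI (swapPt (csPt p))) :=
    sum_cs n (fun p => FcI p + FcI (swapPt p))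
  have e4 : ∑ p ∈ RA n, PcI p = ∑ p ∈ RA n, PcI (muPt p) := sum_mu n PcI
  -- the key pointwise identity on the region b < a
  have key : ∀ p ∈ RA n,
      (FcI (csPt p) + FcI (swapPt (csPt p))) + PcI (muPt p)
        + 6 * ((p.1 : ℤ) ^ 3 * (p.2.2.1 : ℤ) ^ 5 + (p.1 : ℤ) ^ 5 * (p.2.2.1 : ℤ) ^ 3)
      = (FcI p + FcI (swapPt p)) + PcI p := by
    rintro ⟨a, x, b, y⟩ hp
    simp only [RA, mem_filter, mem_QdS] at hp
    obtain ⟨⟨⟨h1, h2, h3, h4⟩, hs⟩, hlt⟩ := hp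
    simp only [FcI, PcI, csPt, swapPt, muPt]
    have hab : ((a - b : ℕ) : ℤ) = (a : ℤ) - (b : ℤ) := by
      rw [Nat.cast_sub hlt.le]
    push_cast [hab]
    ring
  have e5 : ∑ p ∈ RA n,
      ((FcI (csPt p) + FcI (swapPt (csPt p))) + PcI (muPt p)
        + 6 * ((p.1 : ℤ) ^ 3 * (p.2.2.1 : ℤ) ^ 5 + (p.1 : ℤ) ^ 5 * (p.2.2.1 : ℤ) ^ 3))
      = ∑ p ∈ RA n, ((FcI p + FcI (swapPt p)) + PcI p) := Finset.sum_congr rfl key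
  rw [Finset.sum_add_distrib, Finset.sum_add_distrib, ← Finset.mul_sum,
    Finset.sum_add_distrib, Finset.sum_add_distrib, Finset.sum_add_distrib] at e5
  -- T split
  have tsplit := splitAB n f35I
  have t35 : ∑ p ∈ RA n, (f35I p + f35I (swapPt p))
      = ∑ p ∈ RA n, ((p.1 : ℤ) ^ 3 * (p.2.2.1 : ℤ) ^ 5
          + (p.1 : ℤ) ^ 5 * (p.2.2.1 : ℤ) ^ 3) :=
    Finset.sum_congr rfl fun p _ => by simp only [f35I, swapPt]; ring
  -- diagonal conversions
  have cD : ∑ p ∈ DA n, (6 * f35I p - FcI p)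
      = ∑ p ∈ DA n, ((p.1 : ℤ) ^ 8 + (p.2.1 : ℤ) ^ 6 * (p.2.2.2 : ℤ) ^ 2) := by
    apply Finset.sum_congr rfl
    rintro ⟨a, x, b, y⟩ hp
    simp only [DA, mem_filter, mem_QdS] at hp
    obtain ⟨_, hab⟩ := hp
    simp only [f35I, FcI]
    rw [← hab]
    ring
  rw [Finset.sum_sub_distrib, ← Finset.mul_sum] at cD
  have cD2 : ∑ p ∈ DA n, ((p.1 : ℤ) ^ 8 + (p.2.1 : ℤ) ^ 6 * (p.2.2.2 : ℤ) ^ 2)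
      = ∑ p ∈ DX n, ((p.2.1 : ℤ) ^ 8 + (p.1 : ℤ) ^ 6 * (p.2.2.1 : ℤ) ^ 2) :=
    sum_conj_diag n (fun p => (p.1 : ℤ) ^ 8 + (p.2.1 : ℤ) ^ 6 * (p.2.2.2 : ℤ) ^ 2)
  have cD3 : ∑ p ∈ DX n, (FcI p + ((p.2.1 : ℤ) ^ 8 + (p.1 : ℤ) ^ 6 * (p.2.2.1 : ℤ) ^ 2))
      = ∑ p ∈ DX n, (3 * (p.1 : ℤ) ^ 3 * (p.2.2.1 : ℤ) ^ 5
          + 2 * (p.1 : ℤ) ^ 4 * (p.2.2.1 : ℤ) ^ 4 + (p.1 : ℤ) ^ 6 * (p.2.2.1 : ℤ) ^ 2) := by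
    apply Finset.sum_congr rfl
    rintro ⟨a, x, b, y⟩ hp
    simp only [DX, mem_filter, mem_QdS] at hp
    obtain ⟨_, hxy⟩ := hp
    simp only [FcI]
    rw [← hxy]
    ring
  rw [Finset.sum_add_distrib] at cD3
  rw [t35] at tsplit
  simp only [Finset.sum_add_distrib] at e1 e2 e3 e5 tsplit cD cD2 cD3 ⊢
  linarith [e1, e2, e3, e4, e5, tsplit, cD, cD2, cD3]
/-- For every positive integer `n`,
`11 σ₉(n) = 21 σ₅(n) − 10 σ₃(n) + 5040 ∑_{m=1}^{n-1} σ₃(m) σ₅(n−m)`. -/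
theorem eleven_sigma9_eq (n : ℕ) (hn : 0 < n) :
    11 * (∑ d ∈ n.divisors, (d : ℤ) ^ 9) =
      21 * (∑ d ∈ n.divisors, (d : ℤ) ^ 5) - 10 * (∑ d ∈ n.divisors, (d : ℤ) ^ 3) +
        5040 * ∑ m ∈ Finset.Ioo 0 n,
          (∑ d ∈ m.divisors, (d : ℤ) ^ 3) * (∑ d ∈ (n - m).divisors, (d : ℤ) ^ 5) := by
  have hconv : ∑ m ∈ Finset.Ioo 0 n,
      (∑ d ∈ m.divisors, (d : ℤ) ^ 3) * (∑ d ∈ (n - m).divisors, (d : ℤ) ^ 5)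
      = ∑ p ∈ QdS n, f35I p := conv_eq n hn
  have hdx : ∑ p ∈ DX n, (3 * (p.1 : ℤ) ^ 3 * (p.2.2.1 : ℤ) ^ 5
        + 2 * (p.1 : ℤ) ^ 4 * (p.2.2.1 : ℤ) ^ 4 + (p.1 : ℤ) ^ 6 * (p.2.2.1 : ℤ) ^ 2)
      = ∑ d ∈ n.divisors, ∑ c ∈ Finset.Ico 1 d,
          (3 * (c : ℤ) ^ 3 * ((d - c : ℕ) : ℤ) ^ 5 + 2 * (c : ℤ) ^ 4 * ((d - c : ℕ) : ℤ) ^ 4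
            + (c : ℤ) ^ 6 * ((d - c : ℕ) : ℤ) ^ 2) :=
    sum_DX n hn (fun c e => 3 * (c : ℤ) ^ 3 * (e : ℤ) ^ 5 + 2 * (c : ℤ) ^ 4 * (e : ℤ) ^ 4
      + (c : ℤ) ^ 6 * (e : ℤ) ^ 2)
  have h6 := (six_T n).trans hdx
  have hper : ∀ d ∈ n.divisors,
      840 * ∑ c ∈ Finset.Ico 1 d,
          (3 * (c : ℤ) ^ 3 * ((d - c : ℕ) : ℤ) ^ 5 + 2 * (c : ℤ) ^ 4 * ((d - c : ℕ) : ℤ) ^ 4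
            + (c : ℤ) ^ 6 * ((d - c : ℕ) : ℤ) ^ 2)
      = 11 * (d : ℤ) ^ 9 - 21 * (d : ℤ) ^ 5 + 10 * (d : ℤ) ^ 3 := by
    intro d _
    have hIco : ∑ c ∈ Finset.Ico 1 d,
        (3 * (c : ℤ) ^ 3 * ((d - c : ℕ) : ℤ) ^ 5 + 2 * (c : ℤ) ^ 4 * ((d - c : ℕ) : ℤ) ^ 4
          + (c : ℤ) ^ 6 * ((d - c : ℕ) : ℤ) ^ 2)
        = ∑ c ∈ Finset.range d,
            (3 * (c : ℤ) ^ 3 * ((d : ℤ) - c) ^ 5 + 2 * (c : ℤ) ^ 4 * ((d : ℤ) - c) ^ 4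
              + (c : ℤ) ^ 6 * ((d : ℤ) - c) ^ 2) := by
      have step1 : ∑ c ∈ Finset.Ico 1 d,
          (3 * (c : ℤ) ^ 3 * ((d - c : ℕ) : ℤ) ^ 5 + 2 * (c : ℤ) ^ 4 * ((d - c : ℕ) : ℤ) ^ 4
            + (c : ℤ) ^ 6 * ((d - c : ℕ) : ℤ) ^ 2)
          = ∑ c ∈ Finset.Ico 1 d,
            (3 * (c : ℤ) ^ 3 * ((d : ℤ) - c) ^ 5 + 2 * (c : ℤ) ^ 4 * ((d : ℤ) - c) ^ 4
              + (c : ℤ) ^ 6 * ((d : ℤ) - c) ^ 2) := by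
        apply Finset.sum_congr rfl
        intro c hc
        simp only [Finset.mem_Ico] at hc
        rw [Nat.cast_sub hc.2.le]
      rw [step1]
      apply Finset.sum_subset
      · intro c hc
        simp only [Finset.mem_Ico] at hc
        simp only [Finset.mem_range]
        omega
      · intro c hc hnc
        simp only [Finset.mem_range] at hc
        simp only [Finset.mem_Ico] at hnc
        have : c = 0 := by omega
        subst this
        norm_num
    rw [hIco]
    exact perdiv d
  have hsum : ∑ d ∈ n.divisors, (840 * ∑ c ∈ Finset.Ico 1 d,
        (3 * (c : ℤ) ^ 3 * ((d - c : ℕ) : ℤ) ^ 5 + 2 * (c : ℤ) ^ 4 * ((d - c : ℕ) : ℤ) ^ 4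
          + (c : ℤ) ^ 6 * ((d - c : ℕ) : ℤ) ^ 2))
      = ∑ d ∈ n.divisors, (11 * (d : ℤ) ^ 9 - 21 * (d : ℤ) ^ 5 + 10 * (d : ℤ) ^ 3) :=
    Finset.sum_congr rfl hper
  rw [← Finset.mul_sum] at hsum
  have hsig : ∑ d ∈ n.divisors, (11 * (d : ℤ) ^ 9 - 21 * (d : ℤ) ^ 5 + 10 * (d : ℤ) ^ 3)
      = 11 * (∑ d ∈ n.divisors, (d : ℤ) ^ 9) - 21 * (∑ d ∈ n.divisors, (d : ℤ) ^ 5)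
        + 10 * (∑ d ∈ n.divisors, (d : ℤ) ^ 3) := by
    simp only [Finset.sum_add_distrib, Finset.sum_sub_distrib, ← Finset.mul_sum]
  linarith [hconv, h6, hsum, hsig]
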